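/- Let E be a finite-dimensional real inner product space, T a subspace of E with orthogonal projection P_T, (z_k) a sequence in E converging to z* ∈ E, and K ∈ ℕ such that z_{k+1} − z* = P_T(z_k − z*) for all k ≥ K. Then z_k = z* for all k ≥ K + 1. -/

import Mathlib

open Filter

/-- Finite convergence: if a convergent sequence satisfies the projection recursion
`z_{k+1} − z* = P_T(z_k − z*)` for `k ≥ K`, then it equals its limit from `K + 1` on. -/
theorem projection_recursion_finite_convergence {E : Type*} [NormedAddCommGroup E]
    [InnerProductSpace ℝ E] [FiniteDimensional ℝ E]
    (T : Submodule ℝ E) (z : ℕ → E) (zs : E) (K : ℕ)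
    (htend : Tendsto z atTop (nhds zs))
    (hrec : ∀ k, K ≤ k →
      z (k + 1) - zs = T.subtypeL (Submodule.orthogonalProjection T (z k - zs))) :
    ∀ k, K + 1 ≤ k → z k = zs := by
  -- membership: for k ≥ K+1, z k - zs ∈ T
  have hmem : ∀ k, K + 1 ≤ k → z k - zs ∈ T := by
    intro k hk
    obtain ⟨m, rfl⟩ := Nat.exists_eq_add_of_le hk
    have : K + 1 + m = (m + K) + 1 := by omega
    rw [this, hrec (m + K) (by omega)]
    exact (Submodule.orthogonalProjection T (z (m + K) - zs)).2
  -- constant from K+1 on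
  have hconst : ∀ k, K + 1 ≤ k → z k = z (K + 1) := by
    intro k hk
    induction k with
    | zero => omega
    | succ n ih =>
      rcases Nat.lt_or_ge n (K + 1) with h | h
      · have : n = K := by omega
        subst this; rfl
      · have hn := hmem n h
        have : z (n + 1) - zs = z n - zs := by
          rw [hrec n (by omega)]
          simp only [Submodule.subtypeL_apply]
          rw [← Submodule.starProjection_apply, Submodule.starProjection_eq_self_iff.mpr hn]
        have hz : z (n + 1) = z n := by
          have := sub_left_injective.eq_iff.mp this
          exact this
        rw [hz, ih h]
  -- limit of eventually constant sequence
  have : Tendsto z atTop (nhds (z (K + 1))) := by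
    apply Tendsto.congr' _ tendsto_const_nhds
    filter_upwards [eventually_ge_atTop (K + 1)] with k hk
    exact (hconst k hk).symm
  have hlim : z (K + 1) = zs := tendsto_nhds_unique this htend
  intro k hk
  rw [hconst k hk, hlim]
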